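/- Let f : ℕ → {-1,1} be completely multiplicative with f(p) = -1 for some prime p. Then the formal power series ∑_{n=1}^∞ f(n) z^n ∈ ℤ[[z]] is not rational: there exist no polynomials p, q ∈ ℤ[z], q ≠ 0, with q(z) ∑ f(n) z^n = p(z). -/

import Mathlib

theorem stmt_13 (f : ℕ → ℤ) (hf1 : f 1 = 1)
    (hmul : ∀ m n, 1 ≤ m → 1 ≤ n → f (m * n) = f m * f n)
    (hval : ∀ n, 1 ≤ n → f n = -1 ∨ f n = 1)
    (p₀ : ℕ) (hp₀ : p₀.Prime) (hfp : f p₀ = -1) :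
    ¬ ∃ p q : Polynomial ℤ, q ≠ 0 ∧
      (q : PowerSeries ℤ) * (PowerSeries.mk fun n =>
        if n = 0 then 0 else f n) = (p : PowerSeries ℤ) := by
  rintro ⟨p, q, hq, heq⟩
  classical
  set A : ℕ → ℤ := fun n => if n = 0 then 0 else f n with hA
  set D := q.natDegree with hDdef
  set v := q.natTrailingDegree with hvdef
  have hvD : v ≤ D := Polynomial.natTrailingDegree_le_natDegree q
  have hc : q.coeff v ≠ 0 :=
    Polynomial.trailingCoeff_nonzero_iff_nonzero.mpr hq
  set w := D - v with hwdef
  set N := p.natDegree + D + 1 with hNdef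
  have hE : ∀ n, N ≤ n → ∑ i ∈ Finset.Icc v D, q.coeff i * A (n - i) = 0 := by
    intro n hn
    have h0 : (PowerSeries.coeff n) ((q : PowerSeries ℤ) * PowerSeries.mk A) = 0 := by
      rw [heq, Polynomial.coeff_coe]
      exact Polynomial.coeff_eq_zero_of_natDegree_lt (by omega)
    rw [PowerSeries.coeff_mul, Finset.Nat.sum_antidiagonal_eq_sum_range_succ_mk] at h0
    simp only [Polynomial.coeff_coe, PowerSeries.coeff_mk] at h0
    rw [← h0]
    refine Finset.sum_subset ?_ ?_
    · intro i hi
      simp only [Finset.mem_Icc] at hi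
      simp only [Finset.mem_range]
      omega
    · intro i hi hni
      simp only [Finset.mem_Icc, not_and_or, not_le] at hni
      rcases hni with h | h
      · rw [Polynomial.coeff_eq_zero_of_lt_natTrailingDegree h, zero_mul]
      · rw [Polynomial.coeff_eq_zero_of_natDegree_lt h, zero_mul]
  have hkey : ∀ n n', N ≤ n → N ≤ n' →
      (∀ i ∈ Finset.Ioc v D, A (n - i) = A (n' - i)) → A (n - v) = A (n' - v) := by
    intro n n' hn hn' H
    have e1 := hE n hn
    have e2 := hE n' hn'
    rw [Finset.Icc_eq_cons_Ioc hvD, Finset.sum_cons] at e1 e2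
    have hsum : ∑ i ∈ Finset.Ioc v D, q.coeff i * A (n - i)
        = ∑ i ∈ Finset.Ioc v D, q.coeff i * A (n' - i) :=
      Finset.sum_congr rfl fun i hi => by rw [H i hi]
    have : q.coeff v * A (n - v) = q.coeff v * A (n' - v) := by linarith
    exact mul_left_cancel₀ hc this
  -- pigeonhole on windows of length w
  obtain ⟨m1, m2, hne, hg⟩ := Finite.exists_ne_map_eq_of_infinite
    (fun m : ℕ => fun k : Fin w => decide (f (N + m + k) = 1))
  have hwin : ∀ k < w, f (N + m1 + k) = f (N + m2 + k) := by
    intro k hk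
    have h := congrFun hg ⟨k, hk⟩
    simp only [decide_eq_decide] at h
    have h1 := hval (N + m1 + k) (by omega)
    have h2 := hval (N + m2 + k) (by omega)
    rcases h1 with h1 | h1 <;> rcases h2 with h2 | h2 <;>
      rw [h1, h2] <;> rw [h1, h2] at h <;> simp at h ⊢
  have hprop : ∀ j, f (N + m1 + j) = f (N + m2 + j) := by
    intro j
    induction j using Nat.strong_induction_on with
    | _ j ih =>
      rcases lt_or_ge j w with hj | hj
      · exact hwin j hj
      · have H : ∀ i ∈ Finset.Ioc v D, A (N + m1 + j + v - i) = A (N + m2 + j + v - i) := by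
          intro i hi
          simp only [Finset.mem_Ioc] at hi
          have h1 : N + m1 + j + v - i = N + m1 + (j + v - i) := by omega
          have h2 : N + m2 + j + v - i = N + m2 + (j + v - i) := by omega
          rw [h1, h2]
          have hlt : j + v - i < j := by omega
          have := ih _ hlt
          simp only [hA]
          rw [if_neg (by omega), if_neg (by omega)]
          exact this
        have hk := hkey (N + m1 + j + v) (N + m2 + j + v) (by omega) (by omega) H
        have h1 : N + m1 + j + v - v = N + m1 + j := by omega
        have h2 : N + m2 + j + v - v = N + m2 + j := by omega
        rw [h1, h2] at hk
        simp only [hA] at hk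
        rw [if_neg (by omega), if_neg (by omega)] at hk
        exact hk
  have hmain : ∃ M T, 1 ≤ T ∧ ∀ j, f (M + j) = f (M + T + j) := by
    rcases hne.lt_or_gt with h | h
    · refine ⟨N + m1, m2 - m1, by omega, fun j => ?_⟩
      rw [hprop j]
      congr 1
      omega
    · refine ⟨N + m2, m1 - m2, by omega, fun j => ?_⟩
      rw [← hprop j]
      congr 1
      omega
  obtain ⟨M, T, hT1, hMT⟩ := hmain
  have hper : ∀ n, M ≤ n → f (n + T) = f n := by
    intro n hn
    have h := hMT (n - M)
    have h1 : M + (n - M) = n := by omega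
    have h2 : M + T + (n - M) = n + T := by omega
    rw [h1, h2] at h
    exact h.symm
  have hstep : ∀ n, M + 1 ≤ n → f (n + 1) = f n := by
    intro n hn
    have hfT := hval T hT1
    have e1 : f (T * (n + 1)) = f T * f (n + 1) := hmul T (n + 1) hT1 (by omega)
    have e2 : f (T * n) = f T * f n := hmul T n hT1 (by omega)
    have hTn : M ≤ T * n := le_trans (by omega) (Nat.le_mul_of_pos_left n hT1)
    have e3 : f (T * n + T) = f (T * n) := hper (T * n) hTn
    have e4 : T * (n + 1) = T * n + T := by ring
    rw [e4, e3, e2] at e1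
    have hfTne : f T ≠ 0 := by rcases hfT with h | h <;> rw [h] <;> norm_num
    exact (mul_left_cancel₀ hfTne e1.symm)
  have hconst : ∀ n, M + 1 ≤ n → f n = f (M + 1) := by
    intro n hn
    induction n, hn using Nat.le_induction with
    | base => rfl
    | succ n hn ih => rw [hstep n hn]; exact ih
  set K := M + 1 with hK
  have hpow : ∀ k : ℕ, 1 ≤ p₀ ^ k := fun k => Nat.one_le_pow _ _ hp₀.pos
  have hKlt : K < p₀ ^ K := Nat.lt_pow_self hp₀.one_lt
  have e1 : f (p₀ ^ K) = f K := hconst _ (by omega)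
  have e2 : f (p₀ ^ (K + 1)) = f K := hconst _ (by
    have : p₀ ^ K ≤ p₀ ^ (K + 1) := Nat.pow_le_pow_right hp₀.pos (by omega)
    omega)
  have e3 : f (p₀ ^ (K + 1)) = f (p₀ ^ K) * f p₀ := by
    rw [pow_succ]
    exact hmul _ _ (hpow K) (by have := hp₀.two_le; omega)
  rw [hfp] at e3
  have hv2 := hval (p₀ ^ K) (hpow K)
  rcases hv2 with h | h <;> rw [h] at e1 e3 <;> norm_num at e3 <;> omega
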